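/- Let Γ = ⟨x_0, ..., x_{n+1} | R⟩ with R = x_0^q(x_0,x_1)⋯(x_n,x_{n+1}) and p | q. Define 1-cocycles c_0, c_1 : Γ → F_p (group homomorphisms to the additive group F_p, since the action is trivial) by c_i(x_j) = δ_{ij} for i = 0,1. Then the cup product [c_0] ∪ [c_1] ∈ H²(Γ, F_p) is nonzero; equivalently, there exists no function f: Γ → F_p making g ↦ (1, c_0(g), f(g); 0, 1, c_1(g); 0, 0, 1) a group homomorphism from Γ to the group of 3×3 upper unitriangular matrices over F_p. -/

import Mathlib

section Umat

variable {p : ℕ}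

def Umat (p : ℕ) (a b c : ZMod p) : Matrix (Fin 3) (Fin 3) (ZMod p) :=
  !![1, a, c; 0, 1, b; 0, 0, 1]

lemma Umat_mul (a b c a' b' c' : ZMod p) :
    Umat p a b c * Umat p a' b' c' = Umat p (a + a') (b + b') (c + c' + a * b') := by
  ext i j
  fin_cases i <;> fin_cases j <;>
    simp [Umat, Matrix.mul_apply, Fin.sum_univ_three, Matrix.vecHead, Matrix.vecTail] <;> ring

lemma Umat_one : Umat p 0 0 0 = 1 := by
  ext i j
  fin_cases i <;> fin_cases j <;> simp [Umat, Matrix.one_apply, Matrix.vecHead, Matrix.vecTail]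

lemma Umat_congr {a b c a' b' c' : ZMod p} (h : Umat p a b c = Umat p a' b' c') :
    a = a' ∧ b = b' ∧ c = c' := by
  refine ⟨?_, ?_, ?_⟩
  · have := congrFun (congrFun h 0) 1; simpa [Umat] using this
  · have := congrFun (congrFun h 1) 2; simpa [Umat] using this
  · have := congrFun (congrFun h 0) 2; simpa [Umat] using this

lemma Umat_pow (a c : ZMod p) : ∀ n : ℕ,
    (Umat p a 0 c) ^ n = Umat p (n * a) 0 (n * c)
  | 0 => by simpa using Umat_one.symm
  | n + 1 => by
    rw [pow_succ, Umat_pow a c n, Umat_mul]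
    push_cast
    ring_nf

lemma Umat_prod (v : ℕ → ZMod p) : ∀ l : List ℕ,
    (l.map fun k => Umat p 0 0 (v k)).prod = Umat p 0 0 (l.map v).sum
  | [] => by simpa using Umat_one.symm
  | k :: l => by
    simp only [List.map_cons, List.prod_cons, List.sum_cons, Umat_prod v l, Umat_mul]
    ring_nf

lemma Umat_comm (a b t a' b' t' : ZMod p) :
    Umat p (-a) (-b) (-t + a * b) * Umat p (-a') (-b') (-t' + a' * b') *
      Umat p a b t * Umat p a' b' t' = Umat p 0 0 (a * b' - a' * b) := by
  rw [Umat_mul, Umat_mul, Umat_mul]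
  have h1 : (-a) + -a' + a + a' = (0 : ZMod p) := by ring
  have h2 : (-b) + -b' + b + b' = (0 : ZMod p) := by ring
  have h3 : (-t + a * b + (-t' + a' * b') + -a * -b') + t + (-a + -a') * b + t' +
      (-a + -a' + a) * b' = a * b' - a' * b := by ring
  rw [h1, h2]
  congr 1

end Umat

/-- For the Demuškin-type one-relator group `Γ = ⟨x₀,…,x_{n+1} ∣ R⟩` with
`R = x₀^q (x₀,x₁)⋯(x_n,x_{n+1})`, `n = 2m`, and `p ∣ q`, the 1-cocycles
`c₀, c₁ : Γ → 𝔽_p` (homomorphisms, the action being trivial) determined by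
`cᵢ(xⱼ) = δᵢⱼ` have nonzero cup product `[c₀] ∪ [c₁] ∈ H²(Γ, 𝔽_p)`: there is no
function `f : Γ → 𝔽_p` making `g ↦ (1, c₀(g), f(g); 0, 1, c₁(g); 0, 0, 1)` a group
homomorphism into the upper unitriangular 3×3 matrices over `𝔽_p`. -/
theorem stmt7 (p m q : ℕ) [Fact p.Prime] (hpq : p ∣ q) (hq : 1 ≤ q)
    (R : FreeGroup ℕ)
    (hR : R = (FreeGroup.of 0) ^ q *
      (((List.range (m + 1)).map fun k =>
        (FreeGroup.of (2 * k))⁻¹ * (FreeGroup.of (2 * k + 1))⁻¹ *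
          FreeGroup.of (2 * k) * FreeGroup.of (2 * k + 1))).prod)
    (c0 c1 : PresentedGroup ({R} : Set (FreeGroup ℕ)) → ZMod p)
    (hc0add : ∀ g h, c0 (g * h) = c0 g + c0 h)
    (hc1add : ∀ g h, c1 (g * h) = c1 g + c1 h)
    (hc0gen : ∀ j : ℕ, c0 (PresentedGroup.of j) = if j = 0 then 1 else 0)
    (hc1gen : ∀ j : ℕ, c1 (PresentedGroup.of j) = if j = 1 then 1 else 0) :
    ¬ ∃ f : PresentedGroup ({R} : Set (FreeGroup ℕ)) → ZMod p,
      ∀ g h,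
        (!![1, c0 (g * h), f (g * h); 0, 1, c1 (g * h); 0, 0, 1] :
            Matrix (Fin 3) (Fin 3) (ZMod p))
          = !![1, c0 g, f g; 0, 1, c1 g; 0, 0, 1] *
            !![1, c0 h, f h; 0, 1, c1 h; 0, 0, 1] := by
  rintro ⟨f, H⟩
  have H' : ∀ g h, Umat p (c0 (g * h)) (c1 (g * h)) (f (g * h))
      = Umat p (c0 g) (c1 g) (f g) * Umat p (c0 h) (c1 h) (f h) := H
  have hf : ∀ g h, f (g * h) = f g + f h + c0 g * c1 h := by
    intro g h
    have := (Umat_congr ((H' g h).trans (Umat_mul _ _ _ _ _ _))).2.2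
    linear_combination this
  have hc0one : c0 1 = 0 := by have := hc0add 1 1; simp only [one_mul] at this
                               linear_combination -this
  have hc1one : c1 1 = 0 := by have := hc1add 1 1; simp only [one_mul] at this
                               linear_combination -this
  have hfone : f 1 = 0 := by
    have := hf 1 1; simp only [one_mul, hc0one, hc1one] at this
    linear_combination -this
  have hc0inv : ∀ g, c0 g⁻¹ = -c0 g := by
    intro g; have := hc0add g⁻¹ g; simp only [inv_mul_cancel, hc0one] at this
    linear_combination -this
  have hc1inv : ∀ g, c1 g⁻¹ = -c1 g := by
    intro g; have := hc1add g⁻¹ g; simp only [inv_mul_cancel, hc1one] at this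
    linear_combination -this
  have hfinv : ∀ g, f g⁻¹ = -f g + c0 g * c1 g := by
    intro g; have := hf g⁻¹ g
    simp only [inv_mul_cancel, hfone, hc0inv] at this
    linear_combination -this
  -- the multiplicative map Γ → matrices
  set Φ : PresentedGroup ({R} : Set (FreeGroup ℕ)) →*
      Matrix (Fin 3) (Fin 3) (ZMod p) :=
    { toFun := fun g => Umat p (c0 g) (c1 g) (f g)
      map_one' := by
        show Umat p (c0 1) (c1 1) (f 1) = 1
        rw [hc0one, hc1one, hfone]; exact Umat_one
      map_mul' := H' } with hΦ
  set ψ : FreeGroup ℕ →* Matrix (Fin 3) (Fin 3) (ZMod p) :=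
    Φ.comp (PresentedGroup.mk ({R} : Set (FreeGroup ℕ))) with hψ
  have hmkR : PresentedGroup.mk ({R} : Set (FreeGroup ℕ)) R = 1 := by
    rw [PresentedGroup.mk]
    exact (QuotientGroup.eq_one_iff R).mpr
      (Subgroup.subset_normalClosure (Set.mem_singleton R))
  have hψR1 : ψ R = 1 := by
    rw [hψ, MonoidHom.comp_apply, hmkR, map_one]
  -- compute ψ on generators
  have hψof : ∀ j : ℕ, ψ (FreeGroup.of j)
      = Umat p (if j = 0 then 1 else 0) (if j = 1 then 1 else 0)
          (f (PresentedGroup.of j)) := by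
    intro j
    have : ψ (FreeGroup.of j)
        = Umat p (c0 (PresentedGroup.of j)) (c1 (PresentedGroup.of j))
            (f (PresentedGroup.of j)) := rfl
    rw [this, hc0gen, hc1gen]
  have hψinv : ∀ j : ℕ, ψ (FreeGroup.of j)⁻¹
      = Umat p (-(if j = 0 then 1 else 0)) (-(if j = 1 then 1 else 0))
          (-(f (PresentedGroup.of j))
            + (if j = 0 then 1 else 0) * (if j = 1 then 1 else 0)) := by
    intro j
    have : ψ (FreeGroup.of j)⁻¹
        = Umat p (c0 (PresentedGroup.of j)⁻¹) (c1 (PresentedGroup.of j)⁻¹)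
            (f (PresentedGroup.of j)⁻¹) := rfl
    rw [this, hc0inv, hc1inv, hfinv, hc0gen, hc1gen]
  -- value of ψ on each commutator word
  have hcomm : ∀ k : ℕ,
      ψ ((FreeGroup.of (2 * k))⁻¹ * (FreeGroup.of (2 * k + 1))⁻¹ *
          FreeGroup.of (2 * k) * FreeGroup.of (2 * k + 1))
        = Umat p 0 0 (if k = 0 then 1 else 0) := by
    intro k
    rw [map_mul, map_mul, map_mul, hψinv, hψinv, hψof, hψof, Umat_comm]
    congr 1
    rcases Nat.eq_zero_or_pos k with hk | hk
    · subst hk; norm_num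
    · have h1 : 2 * k ≠ 0 := by omega
      have h2 : 2 * k ≠ 1 := by omega
      have h3 : 2 * k + 1 ≠ 0 := by omega
      have h4 : 2 * k + 1 ≠ 1 := by omega
      have h5 : k ≠ 0 := by omega
      simp [h1, h2, h3, h4, h5]
  -- compute ψ R
  have hq0 : (q : ZMod p) = 0 := (ZMod.natCast_eq_zero_iff q p).mpr hpq
  have hψR : ψ R = Umat p 0 0 1 := by
    rw [hR, map_mul, map_pow, map_list_prod, List.map_map, hψof]
    have hprod : (List.map (ψ ∘ fun k =>
        (FreeGroup.of (2 * k))⁻¹ * (FreeGroup.of (2 * k + 1))⁻¹ *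
          FreeGroup.of (2 * k) * FreeGroup.of (2 * k + 1)) (List.range (m + 1))).prod
        = Umat p 0 0 1 := by
      have : (List.map (ψ ∘ fun k =>
          (FreeGroup.of (2 * k))⁻¹ * (FreeGroup.of (2 * k + 1))⁻¹ *
            FreeGroup.of (2 * k) * FreeGroup.of (2 * k + 1)) (List.range (m + 1)))
          = List.map (fun k => Umat p 0 0 (if k = 0 then (1 : ZMod p) else 0))
              (List.range (m + 1)) := by
        apply List.map_congr_left
        intro k _
        exact hcomm k
      have hsum : ((List.range (m + 1)).map
          (fun k => if k = 0 then (1 : ZMod p) else 0)).sum = 1 := by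
        rw [List.range_succ_eq_map]
        simp only [List.map_cons, List.sum_cons, List.map_map]
        have hz : (List.map ((fun k => if k = 0 then (1 : ZMod p) else 0) ∘
            Nat.succ) (List.range m)).sum = 0 := by
          apply List.sum_eq_zero
          intro x hx
          simp only [List.mem_map, Function.comp] at hx
          obtain ⟨k, -, hk⟩ := hx
          simpa [Nat.succ_ne_zero] using hk.symm
        rw [hz, add_zero]
        norm_num
      rw [this, Umat_prod, hsum]
    rw [hprod]
    norm_num
    rw [Umat_pow, hq0]
    rw [Umat_mul]
    norm_num
  rw [hψR1] at hψR
  exact zero_ne_one (Umat_congr (Umat_one.trans hψR)).2.2
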